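/- Let a_0, …, a_n be positive integers. The rank κ of the middle-dimensional homology of the Brieskorn manifold Σ(a_0,…,a_n), equal to the coefficient of [1] in ∏_{i=0}^n(a_i E_{a_i} - 1), is given by κ = ∑_{I_s ⊆ I} (-1)^{n+1-s} (∏_{i∈I_s} a_i) / lcm_{i∈I_s} a_i, where I = {0,…,n} and the sum runs over all subsets I_s (including the empty set with convention ∏ = 1, lcm = 1). -/

import Mathlib

/-- The primitive `j`-th root of unity `e^{2πi/j}` as a unit of `ℂ`. -/
noncomputable def zetaU (j : ℕ) : ℂˣ :=
  Units.mk0 (Complex.exp (2 * (Real.pi : ℂ) * Complex.I / (j : ℂ))) (Complex.exp_ne_zero _)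

/-- The averaging element `E_j = (1/j)∑_{k=0}^{j-1}[ζ_j^k]` in the group ring `ℚ[ℂ*]`. -/
noncomputable def Eavg (j : ℕ) : MonoidAlgebra ℚ ℂˣ :=
  (j : ℚ)⁻¹ • ∑ k ∈ Finset.range j, MonoidAlgebra.of ℚ ℂˣ (zetaU j ^ k)

open Finset MonoidAlgebra

lemma zetaU_pow_self (j : ℕ) (hj : 0 < j) : zetaU j ^ j = 1 := by
  have hj' : (j : ℂ) ≠ 0 := Nat.cast_ne_zero.2 hj.ne'
  ext
  push_cast
  rw [show ((zetaU j : ℂ)) = Complex.exp (2 * (Real.pi : ℂ) * Complex.I / (j : ℂ)) from rfl,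
    ← Complex.exp_nat_mul]
  rw [mul_div_cancel₀ _ hj', Complex.exp_two_pi_mul_I]

lemma zetaU_pow_eq_one_iff (j k : ℕ) (hj : 0 < j) (hk : k < j) : zetaU j ^ k = 1 ↔ k = 0 := by
  constructor
  · intro h
    have hj' : (j : ℂ) ≠ 0 := Nat.cast_ne_zero.2 hj.ne'
    have h2 : Complex.exp ((k : ℂ) * (2 * (Real.pi : ℂ) * Complex.I / (j : ℂ))) = 1 := by
      rw [Complex.exp_nat_mul]
      exact congrArg Units.val h
    rw [Complex.exp_eq_one_iff] at h2
    obtain ⟨m, hm⟩ := h2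
    have hπ : (2 * (Real.pi : ℂ) * Complex.I) ≠ 0 := by
      simp [Real.pi_ne_zero, Complex.I_ne_zero]
    have : (k : ℂ) = (m : ℂ) * j := by
      field_simp at hm
      apply mul_right_cancel₀ hπ
      rw [hm]; ring
    have hint : (k : ℤ) = m * j := by exact_mod_cast this
    have hdvd : (j : ℤ) ∣ (k : ℤ) := ⟨m, by linarith⟩
    have : j ∣ k := Int.natCast_dvd_natCast.1 hdvd
    exact Nat.eq_zero_of_dvd_of_lt this hk
  · rintro rfl; exact pow_zero _

noncomputable def of' : ℂˣ →* MonoidAlgebra ℚ ℂˣ := MonoidAlgebra.of ℚ ℂˣ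

section
variable (a : ℕ) [NeZero a]

lemma apos : 0 < a := Nat.pos_of_ne_zero (NeZero.ne a)

noncomputable def chi (m : ZMod a) : ℂˣ := zetaU a ^ m.val

lemma zeta_pow_mod (s : ℕ) : zetaU a ^ (s % a) = zetaU a ^ s := by
  conv_rhs => rw [← Nat.div_add_mod s a]
  rw [pow_add, pow_mul, zetaU_pow_self a (apos a), one_pow, one_mul]

lemma chi_add (x y : ZMod a) : chi a (x + y) = chi a x * chi a y := by
  unfold chi
  rw [ZMod.val_add, zeta_pow_mod, pow_add]

lemma chi_intCast (k : ℤ) : chi a ((k : ZMod a)) = zetaU a ^ k := by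
  have h2 : ∀ t : ℤ, zetaU a ^ (t % (a : ℤ)) = zetaU a ^ t := by
    intro t
    conv_rhs => rw [← Int.mul_ediv_add_emod t (a : ℤ)]
    rw [zpow_add, zpow_mul, zpow_natCast, zetaU_pow_self a (apos a), one_zpow, one_mul]
  have hv : (((k : ZMod a)).val : ℤ) = k % (a : ℤ) := ZMod.val_intCast k
  unfold chi
  rw [← zpow_natCast, hv, h2]

lemma Eavg_eq : Eavg a = (a : ℚ)⁻¹ • ∑ m : ZMod a, of' (chi a m) := by
  unfold Eavg
  congr 1
  refine (Finset.sum_bij' (fun (m : ZMod a) _ => m.val) (fun (k : ℕ) _ => (k : ZMod a)) ?_ ?_ ?_ ?_ ?_).symm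
  · intro m _; exact Finset.mem_range.2 (ZMod.val_lt m)
  · intro k _; exact Finset.mem_univ _
  · intro m _; simp
  · intro k hk; exact ZMod.val_cast_of_lt (Finset.mem_range.1 hk)
  · intro m _; rfl

lemma of_zpow_mul_Eavg (k : ℤ) : of' (zetaU a ^ k) * Eavg a = Eavg a := by
  rw [← chi_intCast, Eavg_eq, mul_smul_comm, Finset.mul_sum]
  congr 1
  have : ∀ m : ZMod a, of' (chi a ((k : ZMod a))) * of' (chi a m) = of' (chi a ((k : ZMod a) + m)) := by
    intro m; rw [← map_mul, chi_add]
  simp_rw [this]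
  exact Fintype.sum_equiv (Equiv.addLeft ((k : ZMod a))) _ _ (fun m => rfl)

end

lemma zetaU_pow_div (c L : ℕ) (hc : 0 < c) (hL : 0 < L) (hdvd : c ∣ L) :
    zetaU L ^ (L / c) = zetaU c := by
  have hc' : (c : ℂ) ≠ 0 := Nat.cast_ne_zero.2 hc.ne'
  have hL' : (L : ℂ) ≠ 0 := Nat.cast_ne_zero.2 hL.ne'
  ext
  push_cast
  rw [show ((zetaU L : ℂ)) = Complex.exp (2 * (Real.pi : ℂ) * Complex.I / (L : ℂ)) from rfl,
    ← Complex.exp_nat_mul,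
    show ((zetaU c : ℂ)) = Complex.exp (2 * (Real.pi : ℂ) * Complex.I / (c : ℂ)) from rfl]
  congr 1
  rw [Nat.cast_div hdvd hc']
  field_simp

lemma Eavg_mul_fixed (c : ℕ) [NeZero c] (x : MonoidAlgebra ℚ ℂˣ)
    (hx : ∀ m : ℕ, of' (zetaU c ^ m) * x = x) : Eavg c * x = x := by
  unfold Eavg
  rw [smul_mul_assoc, Finset.sum_mul]
  have : ∀ k ∈ Finset.range c, (MonoidAlgebra.of ℚ ℂˣ (zetaU c ^ k)) * x = x := fun k _ => hx k
  rw [Finset.sum_congr rfl this, Finset.sum_const, Finset.card_range,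
    ← Nat.cast_smul_eq_nsmul ℚ, smul_smul, inv_mul_cancel₀ (Nat.cast_ne_zero.2 (NeZero.ne c)),
    one_smul]

lemma gcd_lcm_div (a b : ℕ) (ha : 0 < a) (hb : 0 < b) :
    Nat.gcd (Nat.lcm a b / a) (Nat.lcm a b / b) = 1 := by
  set L := Nat.lcm a b with hLdef
  have hL : 0 < L := Nat.lcm_pos ha hb
  set d := Nat.gcd (L / a) (L / b) with hd
  have haL : a ∣ L := Nat.dvd_lcm_left a b
  have hbL : b ∣ L := Nat.dvd_lcm_right a b
  have h1 : d ∣ L / a := Nat.gcd_dvd_left _ _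
  have h2 : d ∣ L / b := Nat.gcd_dvd_right _ _
  have hdL : d ∣ L := h1.trans (Nat.div_dvd_of_dvd haL)
  have ha' : a ∣ L / d := (Nat.dvd_div_iff_mul_dvd hdL).2 (by
    have := (Nat.dvd_div_iff_mul_dvd haL).1 h1
    rwa [mul_comm] at this)
  have hb' : b ∣ L / d := (Nat.dvd_div_iff_mul_dvd hdL).2 (by
    have := (Nat.dvd_div_iff_mul_dvd hbL).1 h2
    rwa [mul_comm] at this)
  have hLd : L ∣ L / d := Nat.lcm_dvd ha' hb'
  have : L / d = L := Nat.dvd_antisymm (Nat.div_dvd_of_dvd hdL) hLd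
  have hmul : L / d * d = L := Nat.div_mul_cancel hdL
  rw [this] at hmul
  nlinarith [Nat.pos_of_dvd_of_pos hdL hL]

lemma Eavg_mul_Eavg (a b : ℕ) (ha : 0 < a) (hb : 0 < b) :
    Eavg a * Eavg b = Eavg (Nat.lcm a b) := by
  set L := Nat.lcm a b with hLdef
  have hL : 0 < L := Nat.lcm_pos ha hb
  haveI : NeZero a := ⟨ha.ne'⟩
  haveI : NeZero b := ⟨hb.ne'⟩
  haveI : NeZero L := ⟨hL.ne'⟩
  have haL : a ∣ L := Nat.dvd_lcm_left a b
  have hbL : b ∣ L := Nat.dvd_lcm_right a b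
  have hza : zetaU L ^ (L / a) = zetaU a := zetaU_pow_div a L ha hL haL
  have hzb : zetaU L ^ (L / b) = zetaU b := zetaU_pow_div b L hb hL hbL
  -- any power of zetaU c (c ∣ L) is an integer power of zetaU L
  have hpow : ∀ (c : ℕ), 0 < c → c ∣ L → ∀ k : ℕ, ∃ z : ℤ, zetaU c ^ k = zetaU L ^ z := by
    intro c hc hcL k
    refine ⟨((L / c : ℕ) : ℤ) * k, ?_⟩
    rw [← zetaU_pow_div c L hc hL hcL, ← zpow_natCast (zetaU L) (L / c),
      ← zpow_natCast (zetaU L ^ (((L / c : ℕ)) : ℤ)) k, ← zpow_mul]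
  have habs : ∀ c : ℕ, ∀ (hc : 0 < c), c ∣ L → Eavg c * Eavg L = Eavg L := by
    intro c hc hcL
    haveI : NeZero c := ⟨hc.ne'⟩
    apply Eavg_mul_fixed
    intro m
    obtain ⟨z, hz⟩ := hpow c hc hcL m
    rw [hz]
    exact of_zpow_mul_Eavg L z
  -- Bezout
  have hgcd := gcd_lcm_div a b ha hb
  have hbez : (1 : ℤ) = (L / a : ℕ) * Nat.gcdA (L / a) (L / b) + (L / b : ℕ) * Nat.gcdB (L / a) (L / b) := by
    have := Nat.gcd_eq_gcd_ab (L / a) (L / b)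
    rw [hgcd] at this
    exact_mod_cast this
  set u := Nat.gcdA (L / a) (L / b)
  set v := Nat.gcdB (L / a) (L / b)
  have hinv : ∀ m : ℕ, of' (zetaU L ^ m) * (Eavg a * Eavg b) = Eavg a * Eavg b := by
    intro m
    have key : zetaU L ^ m = zetaU a ^ (u * m) * zetaU b ^ (v * m) := by
      rw [← hza, ← hzb, ← zpow_natCast (zetaU L) (L / a), ← zpow_natCast (zetaU L) (L / b),
        ← zpow_mul, ← zpow_mul, ← zpow_add, ← zpow_natCast (zetaU L) m]
      congr 1
      have : ((L / a : ℕ) : ℤ) * (u * m) + ((L / b : ℕ) : ℤ) * (v * m)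
          = ((L / a : ℕ) * u + (L / b : ℕ) * v) * m := by ring
      rw [this, ← hbez, one_mul]
    rw [key, map_mul]
    calc of' (zetaU a ^ (u * m)) * of' (zetaU b ^ (v * m)) * (Eavg a * Eavg b)
        = (of' (zetaU a ^ (u * m)) * Eavg a) * (of' (zetaU b ^ (v * m)) * Eavg b) := by ring
      _ = Eavg a * Eavg b := by rw [of_zpow_mul_Eavg, of_zpow_mul_Eavg]
  have h1 : Eavg L * (Eavg a * Eavg b) = Eavg a * Eavg b := Eavg_mul_fixed L _ hinv
  calc Eavg a * Eavg b = Eavg L * (Eavg a * Eavg b) := h1.symm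
    _ = (Eavg a * Eavg L) * Eavg b := by ring
    _ = Eavg L * Eavg b := by rw [habs a ha haL]
    _ = Eavg b * Eavg L := mul_comm _ _
    _ = Eavg L := habs b hb hbL

lemma Eavg_one : Eavg 1 = 1 := by
  unfold Eavg
  simp [MonoidAlgebra.one_def, MonoidAlgebra.of_apply]

lemma Eavg_apply_one (j : ℕ) (hj : 0 < j) : (Eavg j).coeff (1 : ℂˣ) = (j : ℚ)⁻¹ := by
  unfold Eavg
  rw [MonoidAlgebra.coeff_smul_apply, MonoidAlgebra.coeff_sum, Finset.sum_apply']
  have : ∀ k ∈ Finset.range j, (MonoidAlgebra.of ℚ ℂˣ (zetaU j ^ k)).coeff (1 : ℂˣ)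
      = if k = 0 then 1 else 0 := by
    intro k hk
    rw [MonoidAlgebra.of_apply, MonoidAlgebra.coeff_single_apply]
    by_cases h : k = 0
    · simp [h]
    · rw [if_neg h, if_neg]
      intro hcon
      exact h ((zetaU_pow_eq_one_iff j k hj (Finset.mem_range.1 hk)).1 hcon)
  rw [Finset.sum_congr rfl this, Finset.sum_ite_eq' (Finset.range j) 0 (fun _ => (1:ℚ)),
    if_pos (Finset.mem_range.2 hj), smul_eq_mul, mul_one]

lemma lcm_pos_fin {n : ℕ} (a : Fin (n + 1) → ℕ) (ha : ∀ i, 0 < a i) (I : Finset (Fin (n + 1))) :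
    0 < I.lcm a := by
  induction I using Finset.induction_on with
  | empty => simp
  | insert _ _ hni ih =>
    rw [Finset.lcm_insert]
    exact Nat.lcm_pos (ha _) ih

lemma prod_Eavg {n : ℕ} (a : Fin (n + 1) → ℕ) (ha : ∀ i, 0 < a i) (I : Finset (Fin (n + 1))) :
    ∏ i ∈ I, Eavg (a i) = Eavg (I.lcm a) := by
  induction I using Finset.induction_on with
  | empty => simp [Eavg_one]
  | @insert i I hni ih =>
    rw [Finset.prod_insert hni, ih, Eavg_mul_Eavg _ _ (ha i) (lcm_pos_fin a ha I),
      Finset.lcm_insert]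
    rfl

lemma prod_smul' {ι : Type*} (s : Finset ι) (c : ι → ℚ) (f : ι → MonoidAlgebra ℚ ℂˣ) :
    ∏ i ∈ s, (c i • f i) = (∏ i ∈ s, c i) • ∏ i ∈ s, f i := by
  induction s using Finset.cons_induction with
  | empty => simp
  | cons i s hni ih =>
    rw [Finset.prod_cons, Finset.prod_cons, Finset.prod_cons, ih, smul_mul_smul_comm]

/-- The rank `κ` of the middle-dimensional homology of `Σ(a_0,…,a_n)`, i.e. the
coefficient of the identity group element `[1]` in `∏_{i=0}^n (a_i E_{a_i} - 1) ∈ ℚ[ℂ*]`,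
equals `∑_{I_s ⊆ I} (-1)^{n+1-s} (∏_{i∈I_s} a_i) / lcm_{i∈I_s} a_i`. -/
theorem stmt6 (n : ℕ) (a : Fin (n + 1) → ℕ) (ha : ∀ i, 0 < a i) :
    ((∏ i, ((a i : ℚ) • Eavg (a i) - 1) : MonoidAlgebra ℚ ℂˣ).coeff : ℂˣ →₀ ℚ) (1 : ℂˣ) =
      ∑ I ∈ (Finset.univ : Finset (Fin (n + 1))).powerset,
        (-1 : ℚ) ^ (n + 1 - I.card) * (∏ i ∈ I, (a i : ℚ)) / ((I.lcm a : ℕ) : ℚ) := by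
  have expand : (∏ i, ((a i : ℚ) • Eavg (a i) - 1) : MonoidAlgebra ℚ ℂˣ)
      = ∑ I ∈ (Finset.univ : Finset (Fin (n + 1))).powerset,
          (((-1 : ℚ) ^ (n + 1 - I.card)) * ∏ i ∈ I, (a i : ℚ)) • Eavg (I.lcm a) := by
    simp_rw [sub_eq_add_neg]
    rw [Finset.prod_add]
    refine Finset.sum_congr rfl ?_
    intro I hI
    rw [Finset.prod_const, Finset.card_sdiff_of_subset (Finset.mem_powerset.1 hI), Finset.card_univ,
      Fintype.card_fin, prod_smul', prod_Eavg a ha I,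
      show (-1 : MonoidAlgebra ℚ ℂˣ) = ((-1 : ℚ) • 1) by simp, smul_pow, one_pow,
      smul_mul_smul_comm, mul_one, mul_comm]
  rw [expand, MonoidAlgebra.coeff_sum, Finset.sum_apply']
  refine Finset.sum_congr rfl ?_
  intro I hI
  rw [MonoidAlgebra.coeff_smul_apply, Eavg_apply_one _ (lcm_pos_fin a ha I), smul_eq_mul, div_eq_mul_inv]
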